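/- Let (X_i)_{i∈ℤ} be a stationary ergodic process over a finite alphabet 𝕏 with entropy rate h, let k ≤ n be positive integers, and let η > 0. Then η · P(H(k, X_1^n)/k − h > η) ≤ (H(k)/k − h) + E[(H(k, X_1^n)/k − K(k, X_1^n)/n)^−] + E[((K(k, X_1^n) + log₂ P(X_1^n = w)|_{w=X_1^n})/n)^−] + E[((−log₂ P(X_1^n = w)|_{w=X_1^n})/n − h)^−], where x^− = −x·1[x<0]. -/

import Mathlib

open MeasureTheory Filter Real

variable {𝕏 : Type*} [Fintype 𝕏] [Nonempty 𝕏] [DecidableEq 𝕏]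
  [MeasurableSpace 𝕏] [MeasurableSingletonClass 𝕏]

/-- The left shift on two-sided sequences: `(shift ω) i = ω (i + 1)`. -/
def shift (ω : ℤ → 𝕏) : ℤ → 𝕏 := fun i => ω (i + 1)

/-- The block `X_{s+1}^{s+l}` of a sequence `ω`, as a tuple in `𝕏^l`. -/
def blk (s l : ℕ) (ω : ℤ → 𝕏) : Fin l → 𝕏 := fun i => ω ((s : ℤ) + 1 + (i : ℤ))

/-- Shannon entropy (base 2) of a distribution `p` on a finite set:
`H(p) = -∑_{w : p w > 0} p w * log₂ (p w)` (`logb 2 0 = 0`, so zero-mass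
points contribute nothing). -/
noncomputable def Hent {A : Type*} [Fintype A] (p : A → ℝ) : ℝ :=
  -∑ w, p w * Real.logb 2 (p w)

/-- Empirical nonoverlapping-block distribution
`p_k(w, x_1^n) = ⌊n/k⌋⁻¹ ∑_{i=1}^{⌊n/k⌋} 1[x_{(i-1)k+1}^{ik} = w]`. -/
noncomputable def empDist (k n : ℕ) (ω : ℤ → 𝕏) : (Fin k → 𝕏) → ℝ :=
  fun w => (∑ i ∈ Finset.range (n / k), if blk (i * k) k ω = w then (1 : ℝ) else 0) / (n / k : ℕ)

/-- Plug-in estimator `H(k, x_1^n)` of the block entropy. -/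
noncomputable def plugIn (k n : ℕ) (ω : ℤ → 𝕏) : ℝ := Hent (empDist k n ω)

/-- True block distribution `p_k(w) = P(X_1^k = w)`. -/
noncomputable def pblock (μ : Measure (ℤ → 𝕏)) (k : ℕ) : (Fin k → 𝕏) → ℝ :=
  fun w => (μ {ω | blk 0 k ω = w}).toReal

/-- Block entropy `H(k) = H(p_k)`. -/
noncomputable def Hblock (μ : Measure (ℤ → 𝕏)) (k : ℕ) : ℝ := Hent (pblock μ k)

/-- Number `D(k, x_1^n)` of distinct nonoverlapping `k`-blocks in `x_1^n`. -/
noncomputable def Dcount (k n : ℕ) (ω : ℤ → 𝕏) : ℕ :=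
  Set.ncard {w : Fin k → 𝕏 | ∃ i < n / k, blk (i * k) k ω = w}

/-- Length bound `K(k, x_1^n)` of the modified `k`-block code:
`K(k,x_1^n) = 2 log₂ k + (n/k)(H(k,x_1^n) + 2) + 3 k log₂|𝕏| (D(k,x_1^n) + 1)`. -/
noncomputable def Kcode (k n : ℕ) (ω : ℤ → 𝕏) : ℝ :=
  2 * Real.logb 2 k + ((n : ℝ) / k) * (plugIn k n ω + 2)
    + 3 * k * Real.logb 2 (Fintype.card 𝕏) * (Dcount k n ω + 1)

/-- Conditional probability `P(X_1^k = w | ℐ)` given the shift-invariant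
σ-algebra `ℐ`, as a function of the sample point. -/
noncomputable def condP (μ : Measure (ℤ → 𝕏)) (k : ℕ) (w : Fin k → 𝕏) : (ℤ → 𝕏) → ℝ :=
  μ[Set.indicator {ω | blk 0 k ω = w} (fun _ => (1 : ℝ)) | MeasurableSpace.invariants shift]

/-- Conditional block entropy `H(X_1^k | ℐ) = E[-log₂ P(X_1^k = w | ℐ)|_{w = X_1^k}]`. -/
noncomputable def condH (μ : Measure (ℤ → 𝕏)) (k : ℕ) : ℝ :=
  ∫ ω, -Real.logb 2 (condP μ k (blk 0 k ω) ω) ∂μ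

/-- `σ(y) = min(2^y, 1)`. -/
noncomputable def sigmaFn (y : ℝ) : ℝ := min ((2 : ℝ) ^ y) 1

/-- Negative part `x⁻ = -x · 1[x < 0]`. -/
noncomputable def nPart (x : ℝ) : ℝ := if x < 0 then -x else 0

set_option linter.unusedSectionVars false

noncomputable def extSeq (n : ℕ) (v : Fin n → 𝕏) : ℤ → 𝕏 :=
  fun i => if h : 0 < i ∧ i ≤ (n : ℤ) then v ⟨(i - 1).toNat, by omega⟩ else Classical.arbitrary 𝕏

lemma extSeq_blk (n : ℕ) (ω : ℤ → 𝕏) (i : ℤ) (h1 : 0 < i) (h2 : i ≤ (n:ℤ)) :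
    extSeq n (blk 0 n ω) i = ω i := by
  rw [extSeq, dif_pos ⟨h1, h2⟩]
  show ω (((0:ℕ):ℤ) + 1 + (((i-1).toNat : ℕ) : ℤ)) = ω i
  congr 1
  omega

lemma measurable_blk (s l : ℕ) : Measurable (blk (𝕏 := 𝕏) s l) :=
  measurable_pi_iff.2 fun _ => measurable_pi_apply _

lemma blk_extSeq (k n : ℕ) (ω : ℤ → 𝕏) {i : ℕ} (hi : i < n / k) :
    blk (i * k) k (extSeq n (blk 0 n ω)) = blk (i * k) k ω := by
  funext j
  show extSeq n (blk 0 n ω) (((i*k:ℕ):ℤ) + 1 + ((j:ℕ):ℤ)) = _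
  have hb : i * k + 1 + (j:ℕ) ≤ n := by
    have h1 : (i+1) * k ≤ (n/k) * k := Nat.mul_le_mul_right _ hi
    have h2 : n/k*k ≤ n := Nat.div_mul_le_self n k
    have hj : (j:ℕ) < k := j.isLt
    rw [Nat.add_one_mul] at h1
    omega
  apply extSeq_blk
  · positivity
  · exact_mod_cast hb

lemma blk0_extSeq (n : ℕ) (ω : ℤ → 𝕏) :
    blk 0 n (extSeq n (blk 0 n ω)) = blk 0 n ω := by
  funext j
  show extSeq n (blk 0 n ω) (((0:ℕ):ℤ) + 1 + ((j:ℕ):ℤ)) = _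
  apply extSeq_blk
  · positivity
  · have := j.isLt; omega

lemma empDist_extSeq (k n : ℕ) (ω : ℤ → 𝕏) :
    empDist k n (extSeq n (blk 0 n ω)) = empDist k n ω := by
  funext w
  unfold empDist
  congr 1
  refine Finset.sum_congr rfl fun i hi => ?_
  rw [blk_extSeq k n ω (Finset.mem_range.1 hi)]

lemma plugIn_extSeq (k n : ℕ) (ω : ℤ → 𝕏) :
    plugIn k n (extSeq n (blk 0 n ω)) = plugIn k n ω := by
  unfold plugIn; rw [empDist_extSeq]

lemma Dcount_extSeq (k n : ℕ) (ω : ℤ → 𝕏) :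
    Dcount k n (extSeq n (blk 0 n ω)) = Dcount k n ω := by
  unfold Dcount
  congr 1
  ext w
  exact exists_congr fun i => and_congr_right fun hi => by rw [blk_extSeq k n ω hi]

lemma Kcode_extSeq (k n : ℕ) (ω : ℤ → 𝕏) :
    Kcode k n (extSeq n (blk 0 n ω)) = Kcode k n ω := by
  unfold Kcode; rw [plugIn_extSeq, Dcount_extSeq]
lemma measurable_of_factor {n : ℕ} (ψ : (ℤ → 𝕏) → ℝ)
    (hfac : ∀ ω, ψ (extSeq n (blk 0 n ω)) = ψ ω) : Measurable ψ := by
  have : ψ = (fun v => ψ (extSeq n v)) ∘ blk 0 n := funext fun ω => (hfac ω).symm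
  rw [this]
  exact (measurable_of_countable _).comp (measurable_blk 0 n)

lemma integrable_of_factor {μ : Measure (ℤ → 𝕏)} [IsProbabilityMeasure μ] {n : ℕ}
    (ψ : (ℤ → 𝕏) → ℝ) (hfac : ∀ ω, ψ (extSeq n (blk 0 n ω)) = ψ ω) : Integrable ψ μ := by
  obtain ⟨C, hC⟩ : ∃ C, ∀ v : Fin n → 𝕏, |ψ (extSeq n v)| ≤ C :=
    ⟨Finset.univ.sup' ⟨Classical.arbitrary _, Finset.mem_univ _⟩ (fun v => |ψ (extSeq n v)|),
      fun v => Finset.le_sup' (fun v => |ψ (extSeq n v)|) (Finset.mem_univ v)⟩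
  refine (integrable_const C).mono' (measurable_of_factor ψ hfac).aestronglyMeasurable ?_
  filter_upwards with ω
  rw [Real.norm_eq_abs, ← hfac ω]
  exact hC _

lemma shift_iter (s : ℕ) (ω : ℤ → 𝕏) (i : ℤ) : (shift^[s] ω) i = ω (i + s) := by
  induction s generalizing i with
  | zero => simp
  | succ m ih =>
      rw [Function.iterate_succ_apply']
      show (shift^[m] ω) (i + 1) = _
      rw [ih]
      congr 1
      push_cast
      ring

lemma measure_blk_eq {μ : Measure (ℤ → 𝕏)} (hshift : MeasurePreserving shift μ μ)
    (s k : ℕ) (w : Fin k → 𝕏) :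
    μ {ω | blk s k ω = w} = μ {ω | blk 0 k ω = w} := by
  have hset : {ω : ℤ → 𝕏 | blk s k ω = w} = shift^[s] ⁻¹' {ω | blk 0 k ω = w} := by
    ext ω
    have : blk 0 k (shift^[s] ω) = blk s k ω := by
      funext j
      show (shift^[s] ω) (((0:ℕ):ℤ) + 1 + ((j:ℕ):ℤ)) = ω (((s:ℕ):ℤ) + 1 + ((j:ℕ):ℤ))
      rw [shift_iter]
      congr 1
      push_cast
      ring
    simp [Set.mem_preimage, this]
  rw [hset]
  exact (hshift.iterate s).measure_preimage
    ((measurable_blk 0 k (measurableSet_singleton w)).nullMeasurableSet)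

lemma empDist_nonneg (k n : ℕ) (ω : ℤ → 𝕏) (w : Fin k → 𝕏) : 0 ≤ empDist k n ω w := by
  unfold empDist
  apply div_nonneg _ (by positivity)
  exact Finset.sum_nonneg fun i _ => by positivity

lemma empDist_le_one (k n : ℕ) (ω : ℤ → 𝕏) (w : Fin k → 𝕏) (hnk : 0 < n / k) :
    empDist k n ω w ≤ 1 := by
  unfold empDist
  rw [div_le_one (by exact_mod_cast hnk)]
  calc (∑ i ∈ Finset.range (n / k), if blk (i * k) k ω = w then (1:ℝ) else 0)
      ≤ ∑ i ∈ Finset.range (n / k), 1 :=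
        Finset.sum_le_sum fun i _ => by split <;> norm_num
    _ = ((n / k : ℕ) : ℝ) := by simp

lemma integrable_empDist {μ : Measure (ℤ → 𝕏)} [IsProbabilityMeasure μ]
    (k n : ℕ) (w : Fin k → 𝕏) : Integrable (fun ω => empDist k n ω w) μ :=
  integrable_of_factor _ fun ω => by rw [empDist_extSeq]

lemma integral_empDist {μ : Measure (ℤ → 𝕏)} [IsProbabilityMeasure μ]
    (hshift : MeasurePreserving shift μ μ) (k n : ℕ) (hnk : 0 < n / k) (w : Fin k → 𝕏) :
    ∫ ω, empDist k n ω w ∂μ = pblock μ k w := by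
  have hint : ∀ i : ℕ, Integrable (fun ω => if blk (i * k) k ω = w then (1:ℝ) else 0) μ := by
    intro i
    have : (fun ω => if blk (i * k) k ω = w then (1:ℝ) else 0)
        = Set.indicator {ω | blk (i * k) k ω = w} (fun _ => (1:ℝ)) := by
      funext ω; rw [Set.indicator_apply]; rfl
    rw [this]
    exact (integrable_const 1).indicator (measurable_blk (i*k) k (measurableSet_singleton w))
  have hval : ∀ i : ℕ, ∫ ω, (if blk (i * k) k ω = w then (1:ℝ) else 0) ∂μ = pblock μ k w := by
    intro i
    have : (fun ω => if blk (i * k) k ω = w then (1:ℝ) else 0)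
        = Set.indicator {ω | blk (i * k) k ω = w} (fun _ => (1:ℝ)) := by
      funext ω; rw [Set.indicator_apply]; rfl
    rw [this, show {ω : ℤ → 𝕏 | blk (i * k) k ω = w} = blk (i*k) k ⁻¹' {w} from rfl,
      integral_indicator_const (1:ℝ) (measurable_blk (i*k) k (measurableSet_singleton w)),
      show blk (i*k) k ⁻¹' {w} = {ω : ℤ → 𝕏 | blk (i * k) k ω = w} from rfl,
      measureReal_def, measure_blk_eq hshift (i*k) k w]
    simp [pblock]
  unfold empDist
  rw [integral_div, integral_finset_sum _ (fun i _ => hint i)]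
  rw [Finset.sum_congr rfl (fun i _ => hval i), Finset.sum_const, Finset.card_range,
    nsmul_eq_mul, mul_div_cancel_left₀ _ (by exact_mod_cast hnk.ne' : ((n/k:ℕ):ℝ) ≠ 0)]

lemma Hent_eq {A : Type*} [Fintype A] (p : A → ℝ) :
    Hent p = (∑ w, Real.negMulLog (p w)) / Real.log 2 := by
  unfold Hent Real.negMulLog Real.logb
  rw [Finset.sum_div, ← Finset.sum_neg_distrib]
  exact Finset.sum_congr rfl fun w _ => by ring

lemma integral_plugIn_le {μ : Measure (ℤ → 𝕏)} [IsProbabilityMeasure μ]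
    (hshift : MeasurePreserving shift μ μ) (k n : ℕ) (hk : 0 < k) (hkn : k ≤ n) :
    ∫ ω, plugIn k n ω ∂μ ≤ Hblock μ k := by
  have hnk : 0 < n / k := Nat.div_pos hkn hk
  have hplug : ∀ ω : ℤ → 𝕏, plugIn k n ω = (∑ w, Real.negMulLog (empDist k n ω w)) / Real.log 2 :=
    fun ω => by unfold plugIn; exact Hent_eq _
  have hint : ∀ w : Fin k → 𝕏, Integrable (fun ω => Real.negMulLog (empDist k n ω w)) μ :=
    fun w => integrable_of_factor _ fun ω => by rw [empDist_extSeq]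
  calc ∫ ω, plugIn k n ω ∂μ
      = (∑ w, ∫ ω, Real.negMulLog (empDist k n ω w) ∂μ) / Real.log 2 := by
        rw [integral_congr_ae (Filter.Eventually.of_forall hplug), integral_div,
          integral_finset_sum _ (fun w _ => hint w)]
    _ ≤ (∑ w, Real.negMulLog (pblock μ k w)) / Real.log 2 := by
        refine (div_le_div_iff_of_pos_right (Real.log_pos one_lt_two)).2 (Finset.sum_le_sum fun w _ => ?_)
        have hmem : ∀ᵐ ω ∂μ, empDist k n ω w ∈ Set.Icc (0:ℝ) 1 :=
            Filter.Eventually.of_forall fun ω =>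
              ⟨empDist_nonneg k n ω w, empDist_le_one k n ω w hnk⟩
        have hj := (Real.concaveOn_negMulLog.subset Set.Icc_subset_Ici_self
            (convex_Icc 0 1)).le_map_integral
            Real.continuous_negMulLog.continuousOn isClosed_Icc hmem
            (integrable_empDist k n w) (hint w)
        rwa [integral_empDist hshift k n hnk w] at hj
    _ = Hblock μ k := (Hent_eq (pblock μ k)).symm

/-- Four-term bound on the upper deviation probability of the plug-in
estimator: for a stationary ergodic process with entropy rate `h`, positive
integers `k ≤ n` and `η > 0`,
`η P(H(k,X_1^n)/k − h > η) ≤ (H(k)/k − h) + E[(H(k,X_1^n)/k − K(k,X_1^n)/n)⁻]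
  + E[((K(k,X_1^n) + log₂ P(X_1^n = w)|_{w=X_1^n})/n)⁻]
  + E[((−log₂ P(X_1^n = w)|_{w=X_1^n})/n − h)⁻]`. -/
theorem deviation_probability_four_term_bound
    {μ : Measure (ℤ → 𝕏)} [IsProbabilityMeasure μ]
    (herg : Ergodic shift μ) (h : ℝ)
    (hrate : Tendsto (fun k => Hblock μ k / k) atTop (nhds h))
    (k n : ℕ) (hk : 0 < k) (hkn : k ≤ n) (η : ℝ) (hη : 0 < η) :
    η * (μ {ω | plugIn k n ω / k - h > η}).toReal ≤
      (Hblock μ k / k - h)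
        + (∫ ω, nPart (plugIn k n ω / k - Kcode k n ω / n) ∂μ)
        + (∫ ω, nPart ((Kcode k n ω + Real.logb 2 (pblock μ n (blk 0 n ω))) / n) ∂μ)
        + ∫ ω, nPart ((-Real.logb 2 (pblock μ n (blk 0 n ω))) / n - h) ∂μ := by
  classical
  have hshift : MeasurePreserving shift μ μ := herg.toMeasurePreserving
  have hiP : Integrable (fun ω => plugIn k n ω / (k:ℝ) - h) μ :=
    integrable_of_factor (n := n) _ fun ω => by rw [plugIn_extSeq]
  have hi2 : Integrable (fun ω => nPart (plugIn k n ω / k - Kcode k n ω / n)) μ :=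
    integrable_of_factor (n := n) _ fun ω => by rw [plugIn_extSeq, Kcode_extSeq]
  have hi3 : Integrable
      (fun ω => nPart ((Kcode k n ω + Real.logb 2 (pblock μ n (blk 0 n ω))) / n)) μ :=
    integrable_of_factor (n := n) _ fun ω => by rw [Kcode_extSeq, blk0_extSeq]
  have hi4 : Integrable
      (fun ω => nPart ((-Real.logb 2 (pblock μ n (blk 0 n ω))) / n - h)) μ :=
    integrable_of_factor (n := n) _ fun ω => by rw [blk0_extSeq]
  have hmP : Measurable (plugIn (𝕏 := 𝕏) k n) :=
    measurable_of_factor (n := n) _ (plugIn_extSeq k n)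
  have hAm : MeasurableSet {ω : ℤ → 𝕏 | plugIn k n ω / k - h > η} :=
    measurableSet_lt measurable_const ((hmP.div_const _).sub_const h)
  have hnn : ∀ x : ℝ, 0 ≤ nPart x := fun x => by unfold nPart; split <;> linarith
  have hxn : ∀ x : ℝ, 0 ≤ x + nPart x := fun x => by unfold nPart; split <;> linarith
  have hkey : ∀ ω, Set.indicator {ω : ℤ → 𝕏 | plugIn k n ω / k - h > η} (fun _ => η) ω ≤
      (plugIn k n ω / k - h) + nPart (plugIn k n ω / k - Kcode k n ω / n)
        + nPart ((Kcode k n ω + Real.logb 2 (pblock μ n (blk 0 n ω))) / n)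
        + nPart ((-Real.logb 2 (pblock μ n (blk 0 n ω))) / n - h) := by
    intro ω
    have habc : (plugIn k n ω / k - Kcode k n ω / n)
        + ((Kcode k n ω + Real.logb 2 (pblock μ n (blk 0 n ω))) / n)
        + ((-Real.logb 2 (pblock μ n (blk 0 n ω))) / n - h) = plugIn k n ω / k - h := by
      ring
    have h2 := hnn (plugIn k n ω / k - Kcode k n ω / n)
    have h3 := hnn ((Kcode k n ω + Real.logb 2 (pblock μ n (blk 0 n ω))) / n)
    have h4 := hnn ((-Real.logb 2 (pblock μ n (blk 0 n ω))) / n - h)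
    by_cases hω : ω ∈ {ω : ℤ → 𝕏 | plugIn k n ω / k - h > η}
    · rw [Set.indicator_of_mem hω]
      have hgt : η < plugIn k n ω / k - h := hω
      linarith
    · rw [Set.indicator_of_notMem hω]
      have g2 := hxn (plugIn k n ω / k - Kcode k n ω / n)
      have g3 := hxn ((Kcode k n ω + Real.logb 2 (pblock μ n (blk 0 n ω))) / n)
      have g4 := hxn ((-Real.logb 2 (pblock μ n (blk 0 n ω))) / n - h)
      linarith
  have hind : Integrable
      (Set.indicator {ω : ℤ → 𝕏 | plugIn k n ω / k - h > η} fun _ => η) μ :=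
    (integrable_const η).indicator hAm
  have hstep : η * (μ {ω : ℤ → 𝕏 | plugIn k n ω / k - h > η}).toReal ≤
      ∫ ω, ((plugIn k n ω / k - h) + nPart (plugIn k n ω / k - Kcode k n ω / n)
        + nPart ((Kcode k n ω + Real.logb 2 (pblock μ n (blk 0 n ω))) / n)
        + nPart ((-Real.logb 2 (pblock μ n (blk 0 n ω))) / n - h)) ∂μ := by
    have hmono := integral_mono hind (((hiP.add hi2).add hi3).add hi4) hkey
    rwa [integral_indicator_const η hAm, smul_eq_mul, mul_comm] at hmono
  have hsplit : ∫ ω, ((plugIn k n ω / k - h) + nPart (plugIn k n ω / k - Kcode k n ω / n)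
        + nPart ((Kcode k n ω + Real.logb 2 (pblock μ n (blk 0 n ω))) / n)
        + nPart ((-Real.logb 2 (pblock μ n (blk 0 n ω))) / n - h)) ∂μ
      = (∫ ω, (plugIn k n ω / k - h) ∂μ)
        + (∫ ω, nPart (plugIn k n ω / k - Kcode k n ω / n) ∂μ)
        + (∫ ω, nPart ((Kcode k n ω + Real.logb 2 (pblock μ n (blk 0 n ω))) / n) ∂μ)
        + ∫ ω, nPart ((-Real.logb 2 (pblock μ n (blk 0 n ω))) / n - h) ∂μ := by
    have e4 := integral_add ((hiP.add hi2).add hi3) hi4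
    have e3 := integral_add (hiP.add hi2) hi3
    have e2 := integral_add hiP hi2
    simp only [Pi.add_apply] at e4 e3 e2
    rw [e4, e3, e2]
  have hmean : ∫ ω, (plugIn k n ω / (k:ℝ) - h) ∂μ ≤ Hblock μ k / k - h := by
    have hint : Integrable (plugIn k n) μ :=
      integrable_of_factor (n := n) _ (plugIn_extSeq k n)
    rw [integral_sub (hint.div_const _) (integrable_const h), integral_div, integral_const,
      measureReal_def, measure_univ, ENNReal.toReal_one, one_smul]
    have hle := integral_plugIn_le hshift k n hk hkn
    gcongr
  linarith [hstep, hsplit ▸ hstep]
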